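/- arXiv:2112.14519 — 2 statements merged into one kernel-verified Lean document; each statement's English description precedes it below -/
import Mathlib

section
/- Let ω = P dx + Q dy with P, Q ∈ C[[x,y]], let f ∈ C[[x,y]] be reduced, let g, h ∈ C[[x,y]] be each relatively prime to f, and let η = η_x dx + η_y dy be a formal 1-form such that gP = h∂_x f + f η_x and gQ = h∂_y f + f η_y. Then for every (a,b) ∈ C² one has i(f, g) + i(f, aP + bQ) = i(f, h) + i(f, a∂_x f + b∂_y f), whenever both sides are finite; in particular the GSV-index i(f,h) − i(f,g) equals i(f, aP+bQ) − i(f, a∂_x f + b∂_y f) for any (a,b) making these intersection numbers finite. -/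
open PowerSeries MvPowerSeries

/-- The ring `ℂ[[x,y]]` of formal power series in two variables. -/
noncomputable abbrev R2 : Type := MvPowerSeries (Fin 2) ℂ

/-- Dimension (as a `ℂ`-vector space) of the quotient by an ideal. -/
noncomputable def idim (I : Ideal R2) : Cardinal := Module.rank ℂ (R2 ⧸ I)

/-- Intersection number `i(f,g) = dim_ℂ ℂ[[x,y]]/(f,g)`. -/
noncomputable def inum (f g : R2) : Cardinal := idim (Ideal.span {f, g})

/-- Formal partial derivative of a two-variable power series. -/
noncomputable def pd (i : Fin 2) (f : R2) : R2 :=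
  fun n => ((n i : ℂ) + 1) * MvPowerSeries.coeff (n + Finsupp.single i 1) f

/-- Evaluation `f(x(t), y(t))` of a two-variable power series along a pair of
one-variable power series with zero constant term. -/
noncomputable def peval (f : R2) (x y : PowerSeries ℂ) : PowerSeries ℂ :=
  PowerSeries.mk fun d =>
    ∑ a ∈ Finset.range (d + 1), ∑ b ∈ Finset.range (d + 1),
      MvPowerSeries.coeff (Finsupp.single 0 a + Finsupp.single 1 b) f *
        PowerSeries.coeff d (x ^ a * y ^ b)

/-- Composition `f(h(t))` of one-variable power series (`h` with zero constant term). -/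
noncomputable def pcomp (f h : PowerSeries ℂ) : PowerSeries ℂ :=
  PowerSeries.mk fun d =>
    ∑ a ∈ Finset.range (d + 1),
      PowerSeries.coeff a f * PowerSeries.coeff d (h ^ a)

/-- A parametrization `(x(t), y(t))` is primitive if it does not factor through a
reparametrization `h(t)` of order `≥ 2`. -/
def IsPrimitiveParam (x y : PowerSeries ℂ) : Prop :=
  ∀ h x' y' : PowerSeries ℂ, PowerSeries.constantCoeff h = 0 →
    x = pcomp x' h → y = pcomp y' h → IsUnit (PowerSeries.coeff 1 h)

/-- The order (algebraic multiplicity) of a two-variable power series: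
the smallest total degree of a nonzero coefficient. -/
noncomputable def nu (f : R2) : ℕ :=
  sInf {d : ℕ | ∃ n : Fin 2 →₀ ℕ, n 0 + n 1 = d ∧ MvPowerSeries.coeff n f ≠ 0}

/-- The Milnor number `μ(f) = dim_ℂ ℂ[[x,y]]/(∂ₓf, ∂_y f)`. -/
noncomputable def mu (f : R2) : Cardinal := inum (pd 0 f) (pd 1 f)

/-- cancellation of a transverse variable power: if `X s ^ N ∣ X t ^ M * u` with `s ≠ t`
then `X s ^ N ∣ u`. -/
lemma aux_Xpow_cancel (s t : Fin 2) (hst : s ≠ t) (N M : ℕ) (u : R2)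
    (H : (X s : R2) ^ N ∣ (X t : R2) ^ M * u) : (X s : R2) ^ N ∣ u := by
  rw [MvPowerSeries.X_pow_dvd_iff] at H ⊢
  intro m hm
  have h2 := H (Finsupp.single t M + m) (by simpa [Finsupp.single_apply, hst.symm] using hm)
  rwa [MvPowerSeries.X_pow_eq, MvPowerSeries.coeff_add_monomial_mul, one_mul] at h2

lemma aux_cancel (f c : R2) (hf : f ≠ 0) (N M : ℕ)
    (h0 : f ∣ (MvPowerSeries.X 0 : R2) ^ N * c) (h1 : f ∣ (MvPowerSeries.X 1 : R2) ^ M * c) : f ∣ c := by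
  obtain ⟨u, hu⟩ := h0
  obtain ⟨v, hv⟩ := h1
  have key : (MvPowerSeries.X 1 : R2) ^ M * u = (MvPowerSeries.X 0 : R2) ^ N * v := by
    have : f * ((MvPowerSeries.X 1 : R2) ^ M * u) = f * ((MvPowerSeries.X 0 : R2) ^ N * v) := by
      ring_nf
      calc f * (MvPowerSeries.X 1:R2) ^ M * u = (MvPowerSeries.X 1:R2)^M * (f * u) := by ring
        _ = (MvPowerSeries.X 1:R2)^M * ((MvPowerSeries.X 0:R2)^N * c) := by rw [← hu]
        _ = (MvPowerSeries.X 0:R2)^N * ((MvPowerSeries.X 1:R2)^M * c) := by ring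
        _ = (MvPowerSeries.X 0:R2)^N * (f * v) := by rw [← hv]
        _ = f * (MvPowerSeries.X 0:R2)^N * v := by ring
    exact mul_left_cancel₀ hf this
  obtain ⟨u', hu'⟩ := aux_Xpow_cancel 0 1 (by decide) N M u ⟨v, key⟩
  refine ⟨u', ?_⟩
  have : (MvPowerSeries.X 0:R2)^N * c = (MvPowerSeries.X 0:R2)^N * (f * u') := by
    rw [hu, hu']; ring
  have hX : ((MvPowerSeries.X 0:R2))^N ≠ 0 := pow_ne_zero _ (by
    intro h
    have := congrArg (MvPowerSeries.coeff (Finsupp.single 0 1)) h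
    simpa using this)
  exact mul_left_cancel₀ hX this

lemma aux_pow_mem (I : Ideal R2) (hfin : Module.rank ℂ (R2 ⧸ I) < Cardinal.aleph0)
    (s : Fin 2) : ∃ N : ℕ, (X s : R2) ^ N ∈ I := by
  classical
  -- the images of powers of X s are not linearly independent
  have hnli : ¬ LinearIndependent ℂ (fun n : ℕ => (Ideal.Quotient.mk I) ((X s : R2) ^ n)) := by
    intro hli
    have := hli.cardinal_le_rank
    simp only [Cardinal.mk_denumerable] at this
    exact absurd (this.trans_lt hfin) (lt_irrefl _)
  rw [linearIndependent_iff] at hnli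
  push_neg at hnli
  obtain ⟨l, hl0, hlne⟩ := hnli
  -- the corresponding power series lies in I
  set q : R2 := l.sum fun n c => c • (X s : R2) ^ n with hq
  have hqI : q ∈ I := by
    rw [← Ideal.Quotient.eq_zero_iff_mem, ← hl0]
    rw [Finsupp.linearCombination_apply]
    simp only [hq]
    rw [Finsupp.sum, Finsupp.sum, map_sum]
    congr 1
  -- factor out the minimal power of X s
  have hsupp : l.support.Nonempty := Finsupp.support_nonempty_iff.mpr hlne
  set k := l.support.min' hsupp with hk
  have hkmem : k ∈ l.support := l.support.min'_mem hsupp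
  set w : R2 := l.sum fun n c => c • (X s : R2) ^ (n - k) with hw
  have hfactor : q = (X s : R2) ^ k * w := by
    rw [hw, hq, Finsupp.mul_sum]
    apply Finsupp.sum_congr
    intro n hn
    have hkn : k ≤ n := l.support.min'_le n hn
    rw [mul_smul_comm, ← pow_add, Nat.add_sub_cancel' hkn]
  have hwc : MvPowerSeries.constantCoeff w = l k := by
    rw [hw, Finsupp.sum, map_sum]
    rw [Finset.sum_eq_single k]
    · rw [Nat.sub_self, pow_zero, MvPowerSeries.smul_eq_C_mul, mul_one, MvPowerSeries.constantCoeff_C]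
    · intro n hn hne
      have hkn : k < n := lt_of_le_of_ne (l.support.min'_le n hn) (Ne.symm hne)
      have : MvPowerSeries.constantCoeff ((X s : R2) ^ (n - k)) = 0 := by
        rw [map_pow, MvPowerSeries.constantCoeff_X, zero_pow (by omega)]
      rw [MvPowerSeries.smul_eq_C_mul, map_mul, this, mul_zero]
    · intro hk'; exact absurd hkmem hk'
  have hwu : IsUnit w := by
    rw [MvPowerSeries.isUnit_iff_constantCoeff, hwc]
    exact Ne.isUnit (Finsupp.mem_support_iff.mp hkmem)
  obtain ⟨W, hW⟩ := hwu
  refine ⟨k, ?_⟩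
  have : (X s : R2) ^ k = q * ↑W⁻¹ := by
    rw [hfactor, ← hW, mul_assoc, W.mul_inv, mul_one]
  rw [this]
  exact I.mul_mem_right _ hqI

/-- Euclid-type cancellation from finiteness of the quotient. -/
lemma aux_euclid (f v : R2) (hf : f ≠ 0)
    (hfin : Module.rank ℂ (R2 ⧸ Ideal.span {f, v}) < Cardinal.aleph0) :
    ∀ c, f ∣ v * c → f ∣ c := by
  intro c hdvd
  obtain ⟨N, hN⟩ := aux_pow_mem _ hfin 0
  obtain ⟨M, hM⟩ := aux_pow_mem _ hfin 1
  obtain ⟨e, he⟩ := hdvd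
  have key : ∀ w : R2, w ∈ Ideal.span {f, v} → f ∣ w * c := by
    intro w hw
    obtain ⟨α, β, hαβ⟩ := Ideal.mem_span_pair.mp hw
    refine ⟨α * c + β * e, ?_⟩
    calc w * c = (α * f + β * v) * c := by rw [hαβ]
      _ = α * (f * c) + β * (v * c) := by ring
      _ = α * (f * c) + β * (f * e) := by rw [he]
      _ = f * (α * c + β * e) := by ring
  exact aux_cancel f c hf N M (key _ hN) (key _ hM)

set_option maxHeartbeats 1000000 in
/-- Additivity of the intersection dimension in a product, given cancellation for `v`. -/
lemma aux_additivity (f u v : R2) (hcan : ∀ c, f ∣ v * c → f ∣ c) :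
    Module.rank ℂ (R2 ⧸ Ideal.span {f, u * v}) =
      Module.rank ℂ (R2 ⧸ Ideal.span {f, u}) + Module.rank ℂ (R2 ⧸ Ideal.span {f, v}) := by
  classical
  set I : Ideal R2 := Ideal.span {f, u}
  set J : Ideal R2 := Ideal.span {f, u * v}
  set K : Ideal R2 := Ideal.span {f, v}
  -- multiplication by v maps I into J
  have hIJ : (I : Submodule R2 R2) ≤ Submodule.comap (v • (LinearMap.id : R2 →ₗ[R2] R2)) J := by
    intro x hx
    obtain ⟨α, β, hαβ⟩ := Ideal.mem_span_pair.mp hx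
    simp only [Submodule.mem_comap, LinearMap.smul_apply, LinearMap.id_coe, id_eq]
    rw [smul_eq_mul]
    apply Ideal.mem_span_pair.mpr
    exact ⟨α * v, β, by rw [← hαβ]; ring⟩
  set φ : (R2 ⧸ I) →ₗ[R2] (R2 ⧸ J) := Submodule.mapQ _ _ _ hIJ
  have hφ : ∀ x : R2, φ (Ideal.Quotient.mk I x) = Ideal.Quotient.mk J (v * x) := by
    intro x
    have := Submodule.mapQ_apply (p := (I : Submodule R2 R2)) (q := (J : Submodule R2 R2))
      (f := v • (LinearMap.id : R2 →ₗ[R2] R2)) (h := hIJ) x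
    exact this
  have hφinj : Function.Injective φ := by
    rw [← LinearMap.ker_eq_bot, eq_bot_iff]
    intro y hy
    obtain ⟨x, rfl⟩ := Ideal.Quotient.mk_surjective y
    rw [LinearMap.mem_ker, hφ, Ideal.Quotient.eq_zero_iff_mem] at hy
    obtain ⟨α, β, hαβ⟩ := Ideal.mem_span_pair.mp hy
    have hdvd : f ∣ v * (x - β * u) := ⟨α, by linear_combination -hαβ⟩
    obtain ⟨γ, hγ⟩ := hcan _ hdvd
    have hx : x ∈ I := Ideal.mem_span_pair.mpr ⟨γ, β, by linear_combination -hγ⟩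
    simp only [Submodule.mem_bot]
    rwa [Ideal.Quotient.eq_zero_iff_mem]
  -- the ℂ-linear version
  set ψ : (R2 ⧸ I) →ₗ[ℂ] (R2 ⧸ J) := φ.restrictScalars ℂ
  have hψinj : Function.Injective ψ := hφinj
  set p : Submodule ℂ (R2 ⧸ J) := LinearMap.range ψ
  have hrank := Submodule.rank_quotient_add_rank p
  -- rank of p
  have h1 : Module.rank ℂ ↥p = Module.rank ℂ (R2 ⧸ I) :=
    ((LinearEquiv.ofInjective ψ hψinj).symm.rank_eq)
  -- identify p with the image of K
  have hJK : J ≤ K := by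
    rw [Ideal.span_le]
    intro x hx
    simp only [Set.mem_insert_iff, Set.mem_singleton_iff] at hx
    rcases hx with rfl | rfl
    · exact Ideal.subset_span (by simp)
    · exact Ideal.mul_mem_left _ u (Ideal.subset_span (by simp))
  set q : Submodule R2 (R2 ⧸ J) := Submodule.map J.mkQ (K : Submodule R2 R2)
  have hpq : p = Submodule.restrictScalars ℂ q := by
    apply le_antisymm
    · rintro y ⟨x, rfl⟩
      obtain ⟨x, rfl⟩ := Ideal.Quotient.mk_surjective x
      refine ⟨v * x, ?_, rfl⟩
      exact Ideal.mul_mem_right _ _ (Ideal.subset_span (by simp))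
    · rintro y ⟨x, hx, rfl⟩
      obtain ⟨α, β, hαβ⟩ := Ideal.mem_span_pair.mp hx
      refine ⟨Ideal.Quotient.mk I β, ?_⟩
      show φ (Ideal.Quotient.mk I β) = _
      rw [hφ]
      show Submodule.Quotient.mk (v * β) = Submodule.Quotient.mk x
      rw [Submodule.Quotient.eq]
      refine Ideal.mem_span_pair.mpr ⟨-α, 0, ?_⟩
      rw [← hαβ]; ring
  -- rank of the quotient by p
  have h2 : Module.rank ℂ ((R2 ⧸ J) ⧸ p) = Module.rank ℂ (R2 ⧸ K) := by
    rw [hpq]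
    have e1 := Submodule.Quotient.restrictScalarsEquiv ℂ q
    have e2 := (Submodule.quotientQuotientEquivQuotient (J : Submodule R2 R2) K hJK).restrictScalars ℂ
    exact (e1.trans e2).rank_eq
  rw [h1, h2] at hrank
  rw [← hrank, add_comm]

theorem stmt6 (P Q f g h ηx ηy : R2)
    (hred : Squarefree f)
    (hfg : IsRelPrime f g) (hfh : IsRelPrime f h)
    (e1 : g * P = h * pd 0 f + f * ηx)
    (e2 : g * Q = h * pd 1 f + f * ηy) :
    ∀ a b : ℂ,
      inum f g < Cardinal.aleph0 →
      inum f (a • P + b • Q) < Cardinal.aleph0 →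
      inum f h < Cardinal.aleph0 →
      inum f (a • pd 0 f + b • pd 1 f) < Cardinal.aleph0 →
      inum f g + inum f (a • P + b • Q) =
        inum f h + inum f (a • pd 0 f + b • pd 1 f) := by
  intro a b h1 h2 h3 h4
  have hf0 : f ≠ 0 := by
    rintro rfl
    have : IsUnit (MvPowerSeries.X 0 : R2) := hred (MvPowerSeries.X 0) (dvd_zero _)
    rw [MvPowerSeries.isUnit_iff_constantCoeff, MvPowerSeries.constantCoeff_X] at this
    exact this.ne_zero rfl
  set S : R2 := a • P + b • Q with hS
  set D : R2 := a • pd 0 f + b • pd 1 f with hD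
  -- the fundamental relation
  set A : R2 := MvPowerSeries.C a with hA
  set B : R2 := MvPowerSeries.C b with hB
  have hSc : S = A * P + B * Q := by rw [hS, hA, hB, ← MvPowerSeries.smul_eq_C_mul, ← MvPowerSeries.smul_eq_C_mul]
  have hDc : D = A * pd 0 f + B * pd 1 f := by rw [hD, hA, hB, ← MvPowerSeries.smul_eq_C_mul, ← MvPowerSeries.smul_eq_C_mul]
  have hη : a • ηx + b • ηy = A * ηx + B * ηy := by
    rw [hA, hB, ← MvPowerSeries.smul_eq_C_mul, ← MvPowerSeries.smul_eq_C_mul]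
  have hrel : S * g = D * h + f * (a • ηx + b • ηy) := by
    rw [hSc, hDc, hη]
    linear_combination A * e1 + B * e2
  -- equality of the two product ideals
  have heq : Ideal.span {f, S * g} = Ideal.span {f, D * h} := by
    apply le_antisymm <;> rw [Ideal.span_le] <;> rintro x hx <;>
      simp only [Set.mem_insert_iff, Set.mem_singleton_iff] at hx
    · rcases hx with rfl | rfl
      · exact Ideal.subset_span (by simp)
      · exact Ideal.mem_span_pair.mpr ⟨a • ηx + b • ηy, 1, by linear_combination -hrel⟩
    · rcases hx with rfl | rfl
      · exact Ideal.subset_span (by simp)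
      · exact Ideal.mem_span_pair.mpr ⟨-(a • ηx + b • ηy), 1, by linear_combination hrel⟩
  have h1' : Module.rank ℂ (R2 ⧸ Ideal.span {f, g}) < Cardinal.aleph0 := h1
  have h3' : Module.rank ℂ (R2 ⧸ Ideal.span {f, h}) < Cardinal.aleph0 := h3
  have hcang := aux_euclid f g hf0 h1'
  have hcanh := aux_euclid f h hf0 h3'
  show idim (Ideal.span {f, g}) + idim (Ideal.span {f, S}) =
    idim (Ideal.span {f, h}) + idim (Ideal.span {f, D})
  simp only [idim]
  calc Module.rank ℂ (R2 ⧸ Ideal.span {f, g}) + Module.rank ℂ (R2 ⧸ Ideal.span {f, S})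
      = Module.rank ℂ (R2 ⧸ Ideal.span {f, S * g}) := by
        rw [aux_additivity f S g hcang, add_comm]
    _ = Module.rank ℂ (R2 ⧸ Ideal.span {f, D * h}) := by rw [heq]
    _ = Module.rank ℂ (R2 ⧸ Ideal.span {f, h}) + Module.rank ℂ (R2 ⧸ Ideal.span {f, D}) := by
        rw [aux_additivity f D h hcanh, add_comm]
end

section
/- Let ω = P dx + Q dy with P, Q ∈ C[[x,y]] relatively prime, and let B : f = 0 be a smooth separatrix of ω through the origin with parametrization γ(t) = (t, y(t)) (so f is irreducible of order 1 and γ*(ω) = 0). Suppose g, h ∈ C[[x,y]], each relatively prime to f, and a 1-form η = η_x dx + η_y dy satisfy gP = h ∂_x f + f η_x and gQ = h ∂_y f + f η_y. Then the multiplicity of the foliation along B equals the GSV-index: ord_t Q(γ(t)) = i(f,h) − i(f,g). -/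
open PowerSeries MvPowerSeries

namespace Aux14
noncomputable def fs (a b : ℕ) : Fin 2 →₀ ℕ := Finsupp.single 0 a + Finsupp.single 1 b
@[simp] lemma fs_apply0 (a b : ℕ) : fs a b 0 = a := by simp [fs, Finsupp.single_apply]
@[simp] lemma fs_apply1 (a b : ℕ) : fs a b 1 = b := by simp [fs, Finsupp.single_apply]
lemma fs_self (n : Fin 2 →₀ ℕ) : fs (n 0) (n 1) = n := by
  ext i; fin_cases i
  · simpa using fs_apply0 (n 0) (n 1)
  · simpa using fs_apply1 (n 0) (n 1)
lemma fs_eq_iff {a b : ℕ} {n : Fin 2 →₀ ℕ} : fs a b = n ↔ a = n 0 ∧ b = n 1 := by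
  constructor
  · rintro rfl; simp
  · rintro ⟨rfl, rfl⟩; exact fs_self n
variable (y : PowerSeries ℂ)
lemma coeff_peval (w : R2) (d : ℕ) :
    PowerSeries.coeff d (peval w PowerSeries.X y) =
      ∑ a ∈ Finset.range (d + 1), ∑ b ∈ Finset.range (d + 1),
        MvPowerSeries.coeff (fs a b) w *
          PowerSeries.coeff d (PowerSeries.X ^ a * y ^ b) := by
  simp [peval, fs]
lemma coeff_XY_zero (hy0 : PowerSeries.constantCoeff y = 0) {a b d : ℕ} (h : d < a + b) :
    PowerSeries.coeff d ((PowerSeries.X : PowerSeries ℂ) ^ a * y ^ b) = 0 := by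
  obtain ⟨y', hy'⟩ : (PowerSeries.X : PowerSeries ℂ) ∣ y := PowerSeries.X_dvd_iff.2 hy0
  have : (PowerSeries.X : PowerSeries ℂ) ^ a * y ^ b
      = PowerSeries.X ^ (a + b) * y' ^ b := by rw [hy', mul_pow, pow_add]; ring
  rw [this]
  exact PowerSeries.X_pow_dvd_iff.1 ⟨y' ^ b, rfl⟩ d h

/-- the substitution targets -/
noncomputable def v : Fin 2 → PowerSeries ℂ := ![PowerSeries.X, y]

/-- box truncation of a 2-variable power series to a polynomial -/
noncomputable def Tp (D : ℕ) (F : R2) : MvPolynomial (Fin 2) ℂ :=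
  ∑ p ∈ Finset.range (D + 1) ×ˢ Finset.range (D + 1),
    MvPolynomial.monomial (fs p.1 p.2) (MvPowerSeries.coeff (fs p.1 p.2) F)

lemma coeff_Tp (D : ℕ) (F : R2) (n : Fin 2 →₀ ℕ) :
    MvPolynomial.coeff n (Tp D F) =
      if n 0 ≤ D ∧ n 1 ≤ D then MvPowerSeries.coeff n F else 0 := by
  classical
  rw [Tp, MvPolynomial.coeff_sum]
  simp only [MvPolynomial.coeff_monomial]
  by_cases h : n 0 ≤ D ∧ n 1 ≤ D
  · rw [if_pos h, Finset.sum_eq_single ((n 0, n 1) : ℕ × ℕ)]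
    · rw [if_pos (fs_self n), fs_self n]
    · rintro ⟨a, b⟩ hmem hne
      rw [if_neg]
      intro hfs
      rw [fs_eq_iff] at hfs
      exact hne (Prod.ext hfs.1 hfs.2)
    · intro hnot
      exact absurd (Finset.mem_product.2 ⟨Finset.mem_range.2 (Nat.lt_succ_of_le h.1),
        Finset.mem_range.2 (Nat.lt_succ_of_le h.2)⟩) hnot
  · rw [if_neg h]
    apply Finset.sum_eq_zero
    rintro ⟨a, b⟩ hmem
    rw [Finset.mem_product, Finset.mem_range, Finset.mem_range,
      Nat.lt_succ_iff, Nat.lt_succ_iff] at hmem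
    rw [if_neg]
    intro hfs
    rw [fs_eq_iff] at hfs
    exact h ⟨hfs.1 ▸ hmem.1, hfs.2 ▸ hmem.2⟩

lemma aeval_monomial_eq (n : Fin 2 →₀ ℕ) (c : ℂ) :
    MvPolynomial.aeval (v y) (MvPolynomial.monomial n c) =
      PowerSeries.C c * (PowerSeries.X ^ n 0 * y ^ n 1) := by
  rw [MvPolynomial.aeval_monomial, Finsupp.prod_fintype _ _ (fun i => pow_zero _),
    Fin.prod_univ_two]
  simp [v, PowerSeries.algebraMap_apply]

lemma coeff_aeval_Tp (hy0 : PowerSeries.constantCoeff y = 0) {d D : ℕ} (hdD : d ≤ D)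
    (F : R2) :
    PowerSeries.coeff d (MvPolynomial.aeval (v y) (Tp D F)) =
      PowerSeries.coeff d (peval F PowerSeries.X y) := by
  rw [coeff_peval, ← Finset.sum_product']
  rw [Tp, map_sum, map_sum]
  simp only [aeval_monomial_eq, PowerSeries.coeff_C_mul, fs_apply0, fs_apply1]
  refine (Finset.sum_subset
    (Finset.product_subset_product (Finset.range_subset_range.2 (by omega))
      (Finset.range_subset_range.2 (by omega))) ?_).symm
  rintro ⟨a, b⟩ _ hnot
  rw [Finset.mem_product, Finset.mem_range, Finset.mem_range] at hnot
  push_neg at hnot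
  have hab : d < a + b := by
    by_cases h : a < d + 1
    · have := hnot h; omega
    · omega
  rw [coeff_XY_zero y hy0 hab, mul_zero]

lemma coeff_aeval_high (hy0 : PowerSeries.constantCoeff y = 0) {d : ℕ}
    (p : MvPolynomial (Fin 2) ℂ) (hp : ∀ n ∈ p.support, d < n 0 + n 1) :
    PowerSeries.coeff d (MvPolynomial.aeval (v y) p) = 0 := by
  conv_lhs => rw [MvPolynomial.as_sum p]
  rw [map_sum, map_sum]
  apply Finset.sum_eq_zero
  intro n hn
  rw [aeval_monomial_eq, PowerSeries.coeff_C_mul, coeff_XY_zero y hy0 (hp n hn), mul_zero]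

lemma peval_mul (hy0 : PowerSeries.constantCoeff y = 0) (F G : R2) :
    peval (F * G) PowerSeries.X y = peval F PowerSeries.X y * peval G PowerSeries.X y := by
  classical
  ext d
  rw [← coeff_aeval_Tp y hy0 le_rfl (F * G)]
  have hsupp : ∀ n ∈ (Tp d F * Tp d G - Tp d (F * G)).support, d < n 0 + n 1 := by
    intro n hn
    by_contra hle
    push_neg at hle
    have h0 : n 0 ≤ d := le_trans (Nat.le_add_right _ _) hle
    have h1 : n 1 ≤ d := le_trans (Nat.le_add_left _ _) hle
    rw [MvPolynomial.mem_support_iff] at hn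
    apply hn
    rw [MvPolynomial.coeff_sub, MvPolynomial.coeff_mul, coeff_Tp, if_pos ⟨h0, h1⟩,
      MvPowerSeries.coeff_mul, sub_eq_zero]
    apply Finset.sum_congr rfl
    intro q hq
    rw [Finset.HasAntidiagonal.mem_antidiagonal] at hq
    have hle1 : ∀ i, q.1 i ≤ n i := fun i => by
      have : (q.1 + q.2) i = n i := by rw [hq]
      rw [Finsupp.add_apply] at this; omega
    have hle2 : ∀ i, q.2 i ≤ n i := fun i => by
      have : (q.1 + q.2) i = n i := by rw [hq]
      rw [Finsupp.add_apply] at this; omega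
    rw [coeff_Tp, coeff_Tp, if_pos ⟨le_trans (hle1 0) h0, le_trans (hle1 1) h1⟩,
      if_pos ⟨le_trans (hle2 0) h0, le_trans (hle2 1) h1⟩]
  have key : PowerSeries.coeff d (MvPolynomial.aeval (v y) (Tp d (F * G))) =
      PowerSeries.coeff d (MvPolynomial.aeval (v y) (Tp d F * Tp d G)) := by
    have hsplit : Tp d F * Tp d G = Tp d (F * G) + (Tp d F * Tp d G - Tp d (F * G)) := by ring
    rw [hsplit, map_add, map_add, coeff_aeval_high y hy0 _ hsupp, add_zero]
  rw [key, map_mul, PowerSeries.coeff_mul, PowerSeries.coeff_mul]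
  apply Finset.sum_congr rfl
  intro q hq
  rw [Finset.HasAntidiagonal.mem_antidiagonal] at hq
  rw [coeff_aeval_Tp y hy0 (by omega : q.1 ≤ d) F,
    coeff_aeval_Tp y hy0 (by omega : q.2 ≤ d) G]

lemma peval_add (F G : R2) :
    peval (F + G) PowerSeries.X y = peval F PowerSeries.X y + peval G PowerSeries.X y := by
  ext d
  simp [coeff_peval, add_mul, Finset.sum_add_distrib]

lemma peval_smul (c : ℂ) (F : R2) :
    peval (c • F) PowerSeries.X y = c • peval F PowerSeries.X y := by
  ext d
  simp [coeff_peval, MvPowerSeries.coeff_smul, Finset.mul_sum, mul_assoc]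

lemma fs_eq_zero_iff {a b : ℕ} : fs a b = 0 ↔ a = 0 ∧ b = 0 := by
  rw [fs_eq_iff]; simp

lemma peval_one : peval (1 : R2) PowerSeries.X y = 1 := by
  classical
  ext d
  rw [coeff_peval]
  rw [Finset.sum_eq_single 0]
  · rw [Finset.sum_eq_single 0]
    · simp [MvPowerSeries.coeff_one, fs_eq_zero_iff]
    · intro b _ hb
      rw [MvPowerSeries.coeff_one, if_neg (by simp [fs_eq_zero_iff, hb]), zero_mul]
    · intro h; exact absurd (Finset.mem_range.2 (Nat.succ_pos d)) h
  · intro a _ ha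
    apply Finset.sum_eq_zero
    intro b _
    rw [MvPowerSeries.coeff_one, if_neg (by simp [fs_eq_zero_iff, ha]), zero_mul]
  · intro h; exact absurd (Finset.mem_range.2 (Nat.succ_pos d)) h

/-- evaluation along the parametrization as a ring homomorphism -/
noncomputable def Φr (hy0 : PowerSeries.constantCoeff y = 0) : R2 →+* PowerSeries ℂ where
  toFun w := peval w PowerSeries.X y
  map_one' := peval_one y
  map_mul' := peval_mul y hy0
  map_zero' := by ext d; simp [coeff_peval]
  map_add' := peval_add y

/-- evaluation along the parametrization as an algebra homomorphism -/
noncomputable def Φa (hy0 : PowerSeries.constantCoeff y = 0) : R2 →ₐ[ℂ] PowerSeries ℂ :=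
  AlgHom.mk' (Φr y hy0) (peval_smul y)

@[simp] lemma Φa_apply (hy0 : PowerSeries.constantCoeff y = 0) (w : R2) :
    Φa y hy0 w = peval w PowerSeries.X y := rfl

/-- embedding of one-variable series as `x`-only two-variable series -/
noncomputable def ix (p : PowerSeries ℂ) : R2 :=
  fun n => if n 1 = 0 then PowerSeries.coeff (n 0) p else 0

lemma coeff_ix (p : PowerSeries ℂ) (n : Fin 2 →₀ ℕ) :
    MvPowerSeries.coeff n (ix p) = if n 1 = 0 then PowerSeries.coeff (n 0) p else 0 := rfl

lemma peval_ix (p : PowerSeries ℂ) : peval (ix p) PowerSeries.X y = p := by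
  classical
  ext d
  rw [coeff_peval]
  have hrow : ∀ a ∈ Finset.range (d + 1),
      (∑ b ∈ Finset.range (d + 1), MvPowerSeries.coeff (fs a b) (ix p) *
        PowerSeries.coeff d (PowerSeries.X ^ a * y ^ b)) =
      PowerSeries.coeff a p * (if d = a then 1 else 0) := by
    intro a _
    rw [Finset.sum_eq_single 0]
    · rw [coeff_ix]
      simp [PowerSeries.coeff_X_pow]
    · intro b _ hb
      rw [coeff_ix, if_neg (by simp [hb]), zero_mul]
    · intro h; exact absurd (Finset.mem_range.2 (Nat.succ_pos d)) h
  rw [Finset.sum_congr rfl hrow, Finset.sum_eq_single d]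
  · simp
  · intro a _ ha
    rw [if_neg (Ne.symm ha), mul_zero]
  · intro h; exact absurd (Finset.self_mem_range_succ d) h

lemma coeff_zero_peval (w : R2) :
    PowerSeries.coeff 0 (peval w PowerSeries.X y) = MvPowerSeries.coeff 0 w := by
  rw [coeff_peval]
  simp [fs_eq_zero_iff, fs]

lemma coeff_one_peval (hy0 : PowerSeries.constantCoeff y = 0) (w : R2) :
    PowerSeries.coeff 1 (peval w PowerSeries.X y) =
      MvPowerSeries.coeff (fs 1 0) w +
        MvPowerSeries.coeff (fs 0 1) w * PowerSeries.coeff 1 y := by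
  rw [coeff_peval]
  have h11 : PowerSeries.coeff 1 ((PowerSeries.X : PowerSeries ℂ) ^ 1 * y ^ 1) = 0 :=
    coeff_XY_zero y hy0 (by omega)
  have h00 : PowerSeries.coeff 1 ((PowerSeries.X : PowerSeries ℂ) ^ 0 * y ^ 0) = 0 := by
    simp [PowerSeries.coeff_one]
  simp only [Finset.sum_range_succ, Finset.sum_range_zero, h11, h00]
  simp [PowerSeries.coeff_one_X]
  ring

/-- recursive construction of the quotient coefficients for division by `X 1 - e` -/
noncomputable def divQ (e g : R2) : ℕ → ℕ → ℂ
  | a, b =>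
    MvPowerSeries.coeff (fs a (b + 1)) g +
      ∑ p ∈ Finset.HasAntidiagonal.antidiagonal (fs a (b + 1)),
        MvPowerSeries.coeff p.1 e *
          (if h : p.2 0 < a then divQ e g (p.2 0) (p.2 1)
           else if h2 : p.2 1 < b then divQ e g a (p.2 1)
           else 0)
  termination_by a b => (a, b)
  decreasing_by
  · exact Prod.Lex.left _ _ h
  · exact Prod.Lex.right _ h2

/-- the quotient series -/
noncomputable def divq (e g : R2) : R2 := fun n => divQ e g (n 0) (n 1)

lemma coeff_divq (e g : R2) (n : Fin 2 →₀ ℕ) :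
    MvPowerSeries.coeff n (divq e g) = divQ e g (n 0) (n 1) := rfl

lemma divQ_row (e g : R2) (he0 : MvPowerSeries.coeff 0 e = 0)
    (he1 : MvPowerSeries.coeff (fs 0 1) e = 0) (a b : ℕ) :
    divQ e g a b =
      MvPowerSeries.coeff (fs a (b + 1)) g +
        ∑ p ∈ Finset.HasAntidiagonal.antidiagonal (fs a (b + 1)),
          MvPowerSeries.coeff p.1 e * MvPowerSeries.coeff p.2 (divq e g) := by
  rw [divQ]
  congr 1
  apply Finset.sum_congr rfl
  intro p hp
  rw [Finset.HasAntidiagonal.mem_antidiagonal] at hp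
  have happ : ∀ i, p.1 i + p.2 i = fs a (b + 1) i := fun i => by
    rw [← Finsupp.add_apply, hp]
  have h0 := happ 0
  have h1 := happ 1
  rw [fs_apply0] at h0
  rw [fs_apply1] at h1
  by_cases h : p.2 0 < a
  · rw [dif_pos h, coeff_divq]
  · rw [dif_neg h]
    have hp20 : p.2 0 = a := by omega
    by_cases h2 : p.2 1 < b
    · rw [dif_pos h2, coeff_divq, hp20]
    · -- bad cases: the `e` coefficient vanishes
      rw [dif_neg h2]
      have hp10 : p.1 0 = 0 := by omega
      have hc : p.1 1 = 0 ∨ p.1 1 = 1 := by omega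
      have hzero : MvPowerSeries.coeff p.1 e = 0 := by
        have hform : fs (p.1 0) (p.1 1) = p.1 := fs_self p.1
        have hfs00 : fs 0 0 = 0 := fs_eq_zero_iff.mpr ⟨rfl, rfl⟩
        rcases hc with hc | hc
        · rw [← hform, hp10, hc, hfs00]; exact he0
        · rw [← hform, hp10, hc]; exact he1
      rw [hzero, zero_mul, zero_mul]

lemma div_exists (e : R2) (he0 : MvPowerSeries.coeff 0 e = 0)
    (he1 : MvPowerSeries.coeff (fs 0 1) e = 0) (g : R2) :
    ∃ q r, g = q * (MvPowerSeries.X 1 - e) + ix r := by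
  classical
  set q := divq e g with hq
  refine ⟨q, PowerSeries.mk fun a =>
    MvPowerSeries.coeff (fs a 0) g + MvPowerSeries.coeff (fs a 0) (e * q), ?_⟩
  apply MvPowerSeries.ext
  intro n
  have hX1 : (MvPowerSeries.X 1 : R2) = MvPowerSeries.monomial (Finsupp.single 1 1) 1 := rfl
  rw [map_add, mul_sub, map_sub, hX1, MvPowerSeries.coeff_mul_monomial, coeff_ix]
  rw [PowerSeries.coeff_mk]
  cases hb : n 1 with
  | zero =>
    have hn : fs (n 0) 0 = n := by rw [← hb]; exact fs_self n
    have hnotle : ¬ Finsupp.single (1 : Fin 2) 1 ≤ n := by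
      intro hle
      have := Finsupp.le_def.mp hle 1
      simp [Finsupp.single_apply, hb] at this
    rw [if_neg hnotle, if_pos rfl, hn, mul_comm q e]
    ring
  | succ b =>
    have hn : fs (n 0) (b + 1) = n := by rw [← hb]; exact fs_self n
    have hle : Finsupp.single (1 : Fin 2) 1 ≤ n := by
      rw [Finsupp.le_def]
      intro i
      fin_cases i <;> simp [Finsupp.single_apply] <;> omega
    have hsub : n - Finsupp.single (1 : Fin 2) 1 = fs (n 0) b := by
      ext i
      fin_cases i <;>
        simp [Finsupp.tsub_apply, Finsupp.single_apply, hb]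
    rw [if_pos hle, if_neg (Nat.succ_ne_zero b), hsub, mul_one]
    have hdq : MvPowerSeries.coeff (fs (n 0) b) q = divQ e g (n 0) b := by
      rw [hq, coeff_divq, fs_apply0, fs_apply1]
    rw [hdq, divQ_row e g he0 he1, hn, mul_comm q e, MvPowerSeries.coeff_mul]
    ring

lemma dvd_of_peval_zero (y : PowerSeries ℂ) (hy0 : PowerSeries.constantCoeff y = 0)
    (f : R2) (hf0 : MvPowerSeries.coeff 0 f = 0)
    (hb : MvPowerSeries.coeff (fs 0 1) f ≠ 0)
    (hΦf : peval f PowerSeries.X y = 0) (w : R2)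
    (hw : peval w PowerSeries.X y = 0) : f ∣ w := by
  classical
  set b := MvPowerSeries.coeff (fs 0 1) f with hbdef
  set e : R2 := MvPowerSeries.X 1 - b⁻¹ • f with he
  have hfs01 : fs 0 1 = Finsupp.single (1 : Fin 2) 1 := by
    rw [fs, Finsupp.single_zero, zero_add]
  have hcX0 : MvPowerSeries.coeff 0 (MvPowerSeries.X 1 : R2) = 0 := by
    rw [MvPowerSeries.coeff_X, if_neg]
    intro h
    have h1 := congrArg (fun t : Fin 2 →₀ ℕ => t 1) h
    simp [Finsupp.single_apply] at h1
  have hcX1 : MvPowerSeries.coeff (fs 0 1) (MvPowerSeries.X 1 : R2) = 1 := by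
    rw [hfs01, MvPowerSeries.coeff_X, if_pos rfl]
  have he0 : MvPowerSeries.coeff 0 e = 0 := by
    rw [he, map_sub, hcX0, MvPowerSeries.coeff_smul, hf0, mul_zero, sub_zero]
  have he1 : MvPowerSeries.coeff (fs 0 1) e = 0 := by
    rw [he, map_sub, hcX1, MvPowerSeries.coeff_smul, ← hbdef, inv_mul_cancel₀ hb, sub_self]
  obtain ⟨q, r, hqr⟩ := div_exists e he0 he1 w
  have hX1e : (MvPowerSeries.X 1 : R2) - e = b⁻¹ • f := by rw [he, sub_sub_cancel]
  rw [hX1e] at hqr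
  have hr0 : r = 0 := by
    have : peval w PowerSeries.X y =
        peval q PowerSeries.X y * (b⁻¹ • peval f PowerSeries.X y) + r := by
      rw [hqr, peval_add, peval_mul y hy0, peval_smul, peval_ix]
    rw [hw, hΦf] at this
    simpa using this.symm
  have hix0 : ix (0 : PowerSeries ℂ) = (0 : R2) := by
    apply MvPowerSeries.ext
    intro n
    rw [coeff_ix]
    simp
  refine ⟨b⁻¹ • q, ?_⟩
  rw [hqr, hr0, hix0, add_zero, mul_smul_comm, mul_comm q f, ← mul_smul_comm]

set_option synthInstance.maxHeartbeats 1000000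

section RankQuot

variable {m : ℕ}

noncomputable def lowPoly (m : ℕ) : (Fin m → ℂ) →ₗ[ℂ] PowerSeries ℂ where
  toFun c := ∑ i : Fin m, c i • (PowerSeries.X : PowerSeries ℂ) ^ (i : ℕ)
  map_add' c c' := by
    rw [← Finset.sum_add_distrib]
    exact Finset.sum_congr rfl fun i _ => by rw [Pi.add_apply, add_smul]
  map_smul' a c := by
    simp [Finset.smul_sum, smul_smul]

lemma coeff_lowPoly (c : Fin m → ℂ) {j : ℕ} (hj : j < m) :
    PowerSeries.coeff j (lowPoly m c) = c ⟨j, hj⟩ := by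
  classical
  rw [lowPoly]
  simp only [LinearMap.coe_mk, AddHom.coe_mk, map_sum]
  rw [Finset.sum_eq_single (⟨j, hj⟩ : Fin m)]
  · simp [PowerSeries.coeff_X_pow]
  · intro i _ hi
    rw [PowerSeries.coeff_smul, PowerSeries.coeff_X_pow, if_neg, smul_zero]
    intro hji
    exact hi (Fin.ext hji.symm)
  · intro habs
    exact absurd (Finset.mem_univ _) habs

lemma rank_quot_span (u : PowerSeries ℂ) (hu : u ≠ 0) {m : ℕ} (hm : u.order = m) :
    Module.rank ℂ (PowerSeries ℂ ⧸ Ideal.span {u}) = m := by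
  classical
  have hdvd : (PowerSeries.X : PowerSeries ℂ) ^ m ∣ u := by
    refine PowerSeries.X_pow_dvd_iff.2 fun i hi => PowerSeries.coeff_of_lt_order i ?_
    rw [hm]; exact_mod_cast hi
  obtain ⟨w, hw⟩ := hdvd
  have hcm : PowerSeries.coeff m u ≠ 0 := (PowerSeries.order_eq_nat.1 hm).1
  have hw0 : PowerSeries.constantCoeff w ≠ 0 := by
    intro h0
    apply hcm
    rw [hw]
    have := PowerSeries.coeff_X_pow_mul w m 0
    simpa [h0] using this
  have hwu : IsUnit w := PowerSeries.isUnit_iff_constantCoeff.2 (by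
    exact Ne.isUnit hw0)
  have hspan : Ideal.span ({u} : Set (PowerSeries ℂ)) =
      Ideal.span {(PowerSeries.X : PowerSeries ℂ) ^ m} := by
    rw [Ideal.span_singleton_eq_span_singleton]
    exact (Associated.symm ⟨hwu.unit, by rw [IsUnit.unit_spec, ← hw]⟩)
  rw [hspan]
  set I := Ideal.span {(PowerSeries.X : PowerSeries ℂ) ^ m} with hI
  let φ : (Fin m → ℂ) →ₗ[ℂ] (PowerSeries ℂ ⧸ I) :=
    (Ideal.Quotient.mkₐ ℂ I).toLinearMap.comp (lowPoly m)
  have hφ : ∀ c, φ c = Ideal.Quotient.mk I (lowPoly m c) := fun c => rfl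
  have hmemI : ∀ p : PowerSeries ℂ, p ∈ I ↔ ∀ j < m, PowerSeries.coeff j p = 0 := by
    intro p
    rw [hI, Ideal.mem_span_singleton, ← PowerSeries.X_pow_dvd_iff]
  have hinj : Function.Injective φ := by
    have hker : ∀ c, φ c = 0 → c = 0 := by
      intro c hc
      rw [hφ, Ideal.Quotient.eq_zero_iff_mem, hmemI] at hc
      funext j
      have := hc j j.2
      rw [coeff_lowPoly c j.2] at this
      simpa using this
    intro c c' h
    have : φ (c - c') = 0 := by rw [map_sub, h, sub_self]
    have := hker _ this
    exact sub_eq_zero.1 this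
  have hsurj : Function.Surjective φ := by
    intro z
    obtain ⟨p, rfl⟩ := Ideal.Quotient.mk_surjective z
    refine ⟨fun i => PowerSeries.coeff (i : ℕ) p, ?_⟩
    rw [hφ, Ideal.Quotient.mk_eq_mk_iff_sub_mem, hmemI]
    intro j hj
    rw [map_sub, coeff_lowPoly _ hj, sub_self]
  have := LinearEquiv.rank_eq (LinearEquiv.ofBijective φ ⟨hinj, hsurj⟩)
  rw [rank_fun'] at this
  rw [← this]
  simp

end RankQuot

lemma fs_zero_one : fs 0 1 = Finsupp.single (1 : Fin 2) 1 := by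
  rw [fs, Finsupp.single_zero, zero_add]

lemma peval_sub (y : PowerSeries ℂ) (hy0 : PowerSeries.constantCoeff y = 0) (F G : R2) :
    peval (F - G) PowerSeries.X y = peval F PowerSeries.X y - peval G PowerSeries.X y :=
  map_sub (Φr y hy0) F G

lemma toENat_inum (y : PowerSeries ℂ) (hy0 : PowerSeries.constantCoeff y = 0)
    (f : R2) (hf0 : MvPowerSeries.coeff 0 f = 0)
    (hb : MvPowerSeries.coeff (fs 0 1) f ≠ 0)
    (hΦf : peval f PowerSeries.X y = 0) (g : R2) (hndvd : ¬ f ∣ g) :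
    Cardinal.toENat (inum f g) = (peval g PowerSeries.X y).order := by
  classical
  have hΦg : peval g PowerSeries.X y ≠ 0 := fun h0 =>
    hndvd (dvd_of_peval_zero y hy0 f hf0 hb hΦf g h0)
  have hfin : (peval g PowerSeries.X y).order ≠ ⊤ :=
    (PowerSeries.order_finite_iff_ne_zero.2 hΦg).ne
  obtain ⟨m, hm⟩ := WithTop.ne_top_iff_exists.1 hfin
  set I := Ideal.span {peval g PowerSeries.X y} with hI
  let θ : R2 →ₐ[ℂ] (PowerSeries ℂ ⧸ I) := (Ideal.Quotient.mkₐ ℂ I).comp (Φa y hy0)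
  have hθ : ∀ w : R2, θ w = Ideal.Quotient.mk I (peval w PowerSeries.X y) := fun w => rfl
  have hsurj : Function.Surjective θ := by
    intro z
    obtain ⟨p, rfl⟩ := Ideal.Quotient.mk_surjective z
    exact ⟨ix p, by rw [hθ, peval_ix]⟩
  have hker : RingHom.ker θ = Ideal.span {f, g} := by
    apply le_antisymm
    · intro w hw
      rw [RingHom.mem_ker, hθ, Ideal.Quotient.eq_zero_iff_mem, hI,
        Ideal.mem_span_singleton'] at hw
      obtain ⟨c, hc⟩ := hw
      have hz : peval (w - ix c * g) PowerSeries.X y = 0 := by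
        rw [peval_sub y hy0, peval_mul y hy0, peval_ix, hc, sub_self]
      obtain ⟨q, hq⟩ := dvd_of_peval_zero y hy0 f hf0 hb hΦf _ hz
      rw [Ideal.mem_span_pair]
      refine ⟨q, ix c, ?_⟩
      have : w - ix c * g = f * q := hq
      rw [mul_comm q f, ← this]
      ring
    · rw [Ideal.span_le]
      intro w hw
      simp only [Set.mem_insert_iff, Set.mem_singleton_iff] at hw
      rw [SetLike.mem_coe, RingHom.mem_ker, hθ]
      rcases hw with rfl | rfl
      · rw [hΦf, map_zero]
      · rw [Ideal.Quotient.eq_zero_iff_mem]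
        exact Ideal.subset_span rfl
  have ealg : (R2 ⧸ Ideal.span {f, g}) ≃ₐ[ℂ] (PowerSeries ℂ ⧸ I) :=
    (Ideal.quotientEquivAlgOfEq ℂ hker.symm).trans
      (Ideal.quotientKerAlgEquivOfSurjective hsurj)
  have hrank : Module.rank ℂ (R2 ⧸ Ideal.span {f, g}) = m := by
    rw [ealg.toLinearEquiv.rank_eq]
    exact rank_quot_span _ hΦg hm.symm
  rw [inum, idim, hrank, ← hm, Cardinal.toENat_nat]
  rfl

end Aux14

open Aux14 in
theorem stmt14 (P Q f g h ηx ηy : R2) (hPQ : IsRelPrime P Q)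
    (hf : Irreducible f) (hnuf : nu f = 1)
    (y : PowerSeries ℂ) (hy0 : PowerSeries.constantCoeff y = 0)
    (hpar : peval f PowerSeries.X y = 0)
    (hsep : peval P PowerSeries.X y
          + peval Q PowerSeries.X y * PowerSeries.derivativeFun y = 0)
    (hfg : IsRelPrime f g) (hfh : IsRelPrime f h)
    (e1 : g * P = h * pd 0 f + f * ηx)
    (e2 : g * Q = h * pd 1 f + f * ηy) :
    (peval Q PowerSeries.X y).order + Cardinal.toENat (inum f g) =
      Cardinal.toENat (inum f h) := by
  classical
  -- the constant coefficient of f vanishes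
  have hf00 : MvPowerSeries.coeff 0 f = 0 := by
    by_contra h0
    have h0mem : (0 : ℕ) ∈ {d : ℕ | ∃ n : Fin 2 →₀ ℕ, n 0 + n 1 = d ∧
        MvPowerSeries.coeff n f ≠ 0} := ⟨0, by simp, h0⟩
    have : nu f = 0 := Nat.sInf_eq_zero.2 (Or.inl h0mem)
    omega
  -- some coefficient of degree 1 is nonzero
  have hne : {d : ℕ | ∃ n : Fin 2 →₀ ℕ, n 0 + n 1 = d ∧
      MvPowerSeries.coeff n f ≠ 0}.Nonempty := by
    by_contra hempty
    rw [Set.not_nonempty_iff_eq_empty] at hempty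
    have : nu f = 0 := by rw [nu, hempty]; exact Nat.sInf_empty
    omega
  have h1mem : (1 : ℕ) ∈ {d : ℕ | ∃ n : Fin 2 →₀ ℕ, n 0 + n 1 = d ∧
      MvPowerSeries.coeff n f ≠ 0} := by
    have hmem := Nat.sInf_mem hne
    have hmem2 : nu f ∈ {d : ℕ | ∃ n : Fin 2 →₀ ℕ, n 0 + n 1 = d ∧
        MvPowerSeries.coeff n f ≠ 0} := hmem
    rwa [hnuf] at hmem2
  obtain ⟨n, hn1, hnz⟩ := h1mem
  have hcoeff1 : MvPowerSeries.coeff (fs 1 0) f ≠ 0 ∨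
      MvPowerSeries.coeff (fs 0 1) f ≠ 0 := by
    have hcase : (n 0 = 1 ∧ n 1 = 0) ∨ (n 0 = 0 ∧ n 1 = 1) := by omega
    rcases hcase with ⟨ha, hb⟩ | ⟨ha, hb⟩
    · left
      have hfsn := fs_self n
      rw [ha, hb] at hfsn
      rw [hfsn]; exact hnz
    · right
      have hfsn := fs_self n
      rw [ha, hb] at hfsn
      rw [hfsn]; exact hnz
  -- the linear relation from the parametrization
  have hc1 : MvPowerSeries.coeff (fs 1 0) f +
      MvPowerSeries.coeff (fs 0 1) f * PowerSeries.coeff 1 y = 0 := by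
    have := coeff_one_peval y hy0 f
    rw [hpar] at this
    simpa using this.symm
  have hb : MvPowerSeries.coeff (fs 0 1) f ≠ 0 := by
    rcases hcoeff1 with ha | hb
    · intro h0
      rw [h0, zero_mul, add_zero] at hc1
      exact ha hc1
    · exact hb
  -- f divides neither g nor h
  have hfg' : ¬ f ∣ g := fun hdvd => hf.not_isUnit (hfg dvd_rfl hdvd)
  have hfh' : ¬ f ∣ h := fun hdvd => hf.not_isUnit (hfh dvd_rfl hdvd)
  -- evaluate the second fundamental relation along the parametrization
  have he2 : peval g PowerSeries.X y * peval Q PowerSeries.X y =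
      peval h PowerSeries.X y * peval (pd 1 f) PowerSeries.X y := by
    have hth := congrArg (fun w => peval w PowerSeries.X y) e2
    rw [peval_mul y hy0, peval_add y, peval_mul y hy0, peval_mul y hy0, hpar,
      zero_mul, add_zero] at hth
    exact hth
  -- the order of pd 1 f along the parametrization is 0
  have hpd0 : PowerSeries.coeff 0 (peval (pd 1 f) PowerSeries.X y) =
      MvPowerSeries.coeff (fs 0 1) f := by
    rw [coeff_zero_peval]
    have hrfl : MvPowerSeries.coeff (0 : Fin 2 →₀ ℕ) (pd 1 f) =
        (((0 : Fin 2 →₀ ℕ) 1 : ℂ) + 1) *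
          MvPowerSeries.coeff ((0 : Fin 2 →₀ ℕ) + Finsupp.single 1 1) f := rfl
    rw [hrfl, fs_zero_one]
    simp
  have hordpd : (peval (pd 1 f) PowerSeries.X y).order = 0 := by
    have : (peval (pd 1 f) PowerSeries.X y).order = ((0 : ℕ) : ℕ∞) :=
      PowerSeries.order_eq_nat.2 ⟨by rw [hpd0]; exact hb,
        fun i hi => absurd hi (Nat.not_lt_zero i)⟩
    simpa using this
  have hΦh : peval h PowerSeries.X y ≠ 0 := fun h0 =>
    hfh' (dvd_of_peval_zero y hy0 f hf00 hb hpar h h0)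
  -- conclude on orders
  have horder := congrArg PowerSeries.order he2
  rw [PowerSeries.order_mul, PowerSeries.order_mul, hordpd, add_zero] at horder
  rw [toENat_inum y hy0 f hf00 hb hpar g hfg', toENat_inum y hy0 f hf00 hb hpar h hfh']
  rw [add_comm]
  exact horder
end
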